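/- For the dihedral group D of order 4b (b ≥ 1) as above, the determinant-weighted sum satisfies ∑_{g ∈ D} det(g) · x^{M_s(g)} y^{M(g)−M_s(g)} = (y − 1)(b·x + (b−1)·y − 1), where det(g) is the determinant of g in the 2-dimensional reflection representation. -/
import Mathlib


open Real in
/-- The reflection representation of the dihedral group of order `4b`, where the
generating reflections `s = sr 0` and `t = sr 1` have mirrors at angle `π/(2b)`:
the rotation `r k` acts by rotation through `k·π/b` and the reflection `sr k`
acts by reflection across the line at angle `k·π/(2b)`. -/
noncomputable def rho (b : ℕ) : DihedralGroup (2 * b) → Matrix (Fin 2) (Fin 2) ℝ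
  | DihedralGroup.r k => !![cos (k.val * π / b), -sin (k.val * π / b);
                            sin (k.val * π / b),  cos (k.val * π / b)]
  | DihedralGroup.sr k => !![cos (k.val * π / b),  sin (k.val * π / b);
                             sin (k.val * π / b), -cos (k.val * π / b)]

/-- The one-dimensional character `V_s` of the dihedral group of order `4b`
with `V_s(s) = V_s(sr 0) = -1` and `V_s(t) = V_s(sr 1) = 1`. -/
def chiS (b : ℕ) : DihedralGroup (2 * b) → ℤ
  | DihedralGroup.r k => (-1) ^ k.val
  | DihedralGroup.sr k => (-1) ^ (k.val + 1)

/-- `M_{V_s}(g) = dim im (V_s(g) − 1) ∈ {0,1}`: whether `V_s` is nontrivial on `g`. -/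
def MsD (b : ℕ) (g : DihedralGroup (2 * b)) : ℕ := if chiS b g = 1 then 0 else 1

/-- `M(g) = dim im (g − 1)` in the 2-dimensional reflection representation. -/
noncomputable def MD (b : ℕ) (g : DihedralGroup (2 * b)) : ℕ := (rho b g - 1).rank

open Real Matrix

namespace StmtAux

lemma zmod_sum (n : ℕ) [NeZero n] (f : ℕ → ℝ) :
    ∑ k : ZMod n, f k.val = ∑ i ∈ Finset.range n, f i := by
  refine Finset.sum_nbij' (fun k => k.val) (fun i => (i : ZMod n)) ?_ ?_ ?_ ?_ ?_ <;>
    simp +contextual [ZMod.val_lt, ZMod.val_cast_of_lt, Nat.mod_eq_of_lt]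

def dihEquiv (n : ℕ) : ZMod n ⊕ ZMod n ≃ DihedralGroup n where
  toFun := fun x => match x with | .inl k => .r k | .inr k => .sr k
  invFun := fun g => match g with | .r k => .inl k | .sr k => .inr k
  left_inv := by rintro (k|k) <;> rfl
  right_inv := by rintro (k|k) <;> rfl

lemma det_rho_r (b : ℕ) (k : ZMod (2*b)) : (rho b (.r k)).det = 1 := by
  simp [rho, Matrix.det_fin_two_of]
  nlinarith [sin_sq_add_cos_sq (k.val * π / b)]

lemma det_rho_sr (b : ℕ) (k : ZMod (2*b)) : (rho b (.sr k)).det = -1 := by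
  simp [rho, Matrix.det_fin_two_of]
  nlinarith [sin_sq_add_cos_sq (k.val * π / b)]

lemma rank_eq_two_of_det_ne {A : Matrix (Fin 2) (Fin 2) ℝ} (h : A.det ≠ 0) : A.rank = 2 := by
  have := Matrix.rank_of_isUnit A ((Matrix.isUnit_iff_isUnit_det A).2 (isUnit_iff_ne_zero.2 h))
  simpa using this

lemma one_le_rank_of_ne_zero {A : Matrix (Fin 2) (Fin 2) ℝ} (h : A ≠ 0) : 1 ≤ A.rank := by
  rw [Nat.one_le_iff_ne_zero]
  intro h0
  apply h
  have hr : LinearMap.range A.mulVecLin = ⊥ := by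
    rw [← Submodule.finrank_eq_zero (R := ℝ)]; exact h0
  have h2 : A.mulVecLin = 0 := LinearMap.range_eq_bot.mp hr
  ext i j
  have := congrFun (congrFun (congrArg DFunLike.coe h2) (Pi.single j 1)) i
  simpa [Matrix.mulVecLin, Matrix.mulVec_single] using this

lemma rho_r_zero (b : ℕ) (k : ZMod (2*b)) (h0 : k.val = 0) : rho b (.r k) = 1 := by
  simp [rho, h0]
  rw [Matrix.one_fin_two]

lemma MD_r_zero (b : ℕ) (k : ZMod (2*b)) (h0 : k.val = 0) : MD b (.r k) = 0 := by
  simp [MD, rho_r_zero b k h0, Matrix.rank_zero]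

lemma MD_r (b : ℕ) (hb : 1 ≤ b) [NeZero (2*b)] (k : ZMod (2*b)) (hk : k.val ≠ 0) :
    MD b (.r k) = 2 := by
  apply rank_eq_two_of_det_ne
  set θ : ℝ := k.val * π / b with hθ
  have hb' : (0:ℝ) < b := by exact_mod_cast Nat.lt_of_lt_of_le Nat.zero_lt_one hb
  have hkpos : (0:ℝ) < k.val := by exact_mod_cast Nat.pos_of_ne_zero hk
  have hklt : (k.val:ℝ) < 2 * b := by exact_mod_cast k.val_lt
  have hpos : 0 < θ := div_pos (mul_pos hkpos pi_pos) hb'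
  have hlt : θ < 2 * π := by
    rw [hθ, div_lt_iff₀ hb']
    nlinarith [pi_pos]
  have hc : cos θ ≠ 1 := by
    intro h
    exact absurd ((Real.cos_eq_one_iff_of_lt_of_lt (by linarith) hlt).1 h) (ne_of_gt hpos)
  intro hdet
  apply hc
  rw [Matrix.det_fin_two] at hdet
  simp [rho, Matrix.sub_apply, Matrix.one_apply, -ZMod.natCast_val, ← hθ] at hdet
  nlinarith [sin_sq_add_cos_sq θ, sq_nonneg (cos θ - 1), sq_nonneg (sin θ)]

lemma MD_sr (b : ℕ) (k : ZMod (2*b)) : MD b (.sr k) = 1 := by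
  set θ : ℝ := k.val * π / b with hθ
  set A : Matrix (Fin 2) (Fin 2) ℝ := rho b (.sr k) - 1 with hA
  set B : Matrix (Fin 2) (Fin 2) ℝ := rho b (.sr k) + 1 with hB
  have hAB : A * B = 0 := by
    ext i j
    fin_cases i <;> fin_cases j <;>
      simp [hA, hB, rho, Matrix.mul_apply, Fin.sum_univ_two, Matrix.sub_apply,
        Matrix.add_apply, Matrix.one_apply, ← hθ] <;>
      nlinarith [sin_sq_add_cos_sq θ]
  have hle : A.rank + B.rank ≤ 2 := by
    have := Matrix.rank_add_rank_le_card_of_mul_eq_zero hAB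
    simpa using this
  have hAne : A ≠ 0 := by
    intro h
    have h00 : A 0 0 = 0 := by rw [h]; rfl
    have h11 : A 1 1 = 0 := by rw [h]; rfl
    simp [hA, rho, Matrix.sub_apply, Matrix.one_apply, ← hθ] at h00 h11
    linarith
  have hBne : B ≠ 0 := by
    intro h
    have h00 : B 0 0 = 0 := by rw [h]; rfl
    have h11 : B 1 1 = 0 := by rw [h]; rfl
    simp [hB, rho, Matrix.add_apply, Matrix.one_apply, ← hθ] at h00 h11
    linarith
  have h1 := one_le_rank_of_ne_zero hAne
  have h2 := one_le_rank_of_ne_zero hBne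
  show A.rank = 1
  omega

def Grot (x y : ℝ) (i : ℕ) : ℝ := if i = 0 then 1 else if Even i then y^2 else x*y
def Href (x y : ℝ) (i : ℕ) : ℝ := if Even i then -x else -y

lemma key (x y : ℝ) : ∀ b : ℕ, 1 ≤ b →
    ∑ i ∈ Finset.range (2*b), (Grot x y i + Href x y i)
      = (y - 1) * (b * x + ((b : ℝ) - 1) * y - 1) := by
  refine Nat.le_induction ?_ ?_
  · simp [Finset.sum_range_succ, Grot, Href]
    ring
  · intro n hn ih
    have h2 : 2 * (n+1) = (2*n + 1) + 1 := by ring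
    rw [h2, Finset.sum_range_succ, Finset.sum_range_succ, ih]
    have hne : 2*n ≠ 0 := by omega
    have hev : Even (2*n) := even_two_mul n
    have hod : ¬ Even (2*n+1) := by simp [Nat.even_add_one, hev]
    simp [Grot, Href, hne, hev, hod]
    ring

end StmtAux

open StmtAux in
/-- `∑_{g ∈ D} det(g)·x^{M_s(g)} y^{M(g)−M_s(g)} = (y − 1)(b·x + (b−1)·y − 1)` for the
dihedral group `D` of order `4b`. -/
theorem stmt2 (b : ℕ) (hb : 1 ≤ b) [NeZero (2 * b)] (x y : ℝ) :
    ∑ g : DihedralGroup (2 * b), (rho b g).det * x ^ MsD b g * y ^ (MD b g - MsD b g)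
      = (y - 1) * (b * x + ((b : ℝ) - 1) * y - 1) := by
  classical
  rw [← Equiv.sum_comp (dihEquiv (2*b))
        (fun g => (rho b g).det * x ^ MsD b g * y ^ (MD b g - MsD b g)),
      Fintype.sum_sum_type]
  have hrot : ∀ k : ZMod (2*b),
      (rho b (.r k)).det * x ^ MsD b (.r k) * y ^ (MD b (.r k) - MsD b (.r k))
        = Grot x y k.val := by
    intro k
    by_cases h0 : k.val = 0
    · have hchi : chiS b (.r k) = 1 := by simp [chiS, h0]
      simp [Grot, h0, MsD, hchi, MD_r_zero b k h0, det_rho_r]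
    · rw [MD_r b hb k h0, det_rho_r]
      by_cases he : Even k.val
      · have hchi : chiS b (.r k) = 1 := by simp [chiS, he.neg_one_pow]
        simp [Grot, h0, he, MsD, hchi]
      · have hchi : chiS b (.r k) = -1 := by
          simp [chiS, (Nat.not_even_iff_odd.1 he).neg_one_pow]
        simp [Grot, h0, he, MsD, hchi]
  have hsr : ∀ k : ZMod (2*b),
      (rho b (.sr k)).det * x ^ MsD b (.sr k) * y ^ (MD b (.sr k) - MsD b (.sr k))
        = Href x y k.val := by
    intro k
    rw [MD_sr b k, det_rho_sr]
    by_cases he : Even k.val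
    · have hchi : chiS b (.sr k) = -1 := by
        have : Odd (k.val + 1) := Even.add_one he
        simp [chiS, this.neg_one_pow]
      simp [Href, he, MsD, hchi]
    · have hchi : chiS b (.sr k) = 1 := by
        have : Even (k.val + 1) := Nat.even_add_one.2 he
        simp [chiS, this.neg_one_pow]
      simp [Href, he, MsD, hchi]
  calc (∑ k : ZMod (2*b), (rho b (dihEquiv (2*b) (Sum.inl k))).det
          * x ^ MsD b (dihEquiv (2*b) (Sum.inl k))
          * y ^ (MD b (dihEquiv (2*b) (Sum.inl k)) - MsD b (dihEquiv (2*b) (Sum.inl k))))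
      + (∑ k : ZMod (2*b), (rho b (dihEquiv (2*b) (Sum.inr k))).det
          * x ^ MsD b (dihEquiv (2*b) (Sum.inr k))
          * y ^ (MD b (dihEquiv (2*b) (Sum.inr k)) - MsD b (dihEquiv (2*b) (Sum.inr k))))
      = (∑ k : ZMod (2*b), Grot x y k.val) + ∑ k : ZMod (2*b), Href x y k.val := by
        congr 1 <;> refine Finset.sum_congr rfl fun k _ => ?_
        · exact hrot k
        · exact hsr k
    _ = ∑ i ∈ Finset.range (2*b), (Grot x y i + Href x y i) := by
        rw [zmod_sum, zmod_sum, Finset.sum_add_distrib]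
    _ = (y - 1) * (b * x + ((b : ℝ) - 1) * y - 1) := key x y b hb
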